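/- Let L be a Lagrangian subspace of V ⊕ V* and let Δ̂ = ρ̂(L). Then there exists a unique alternating bilinear form Π on Δ̂ such that Π(ξ, η) = η(v) for every (v, ξ) ∈ L and every η ∈ Δ̂. -/

import Mathlib

/-- The canonical split-signature pairing on `V ⊕ V*`. -/
noncomputable def diracPairing {V : Type*} [AddCommGroup V] [Module ℝ V]
    (x y : V × Module.Dual ℝ V) : ℝ :=
  (x.2 y.1 + y.2 x.1) / 2

/-- `L ⊆ V ⊕ V*` is Lagrangian: `dim L = dim V` and the pairing vanishes on `L`. -/
def IsLagrangian {V : Type*} [AddCommGroup V] [Module ℝ V]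
    (L : Submodule ℝ (V × Module.Dual ℝ V)) : Prop :=
  Module.finrank ℝ L = Module.finrank ℝ V ∧
    ∀ x ∈ L, ∀ y ∈ L, diracPairing x y = 0

/-- For a Lagrangian `L ⊆ V ⊕ V*` with `Δ̂ = ρ̂(L)`, there is a unique alternating
bilinear form `Π` on `Δ̂` such that `Π(ξ, η) = η(v)` for all `(v, ξ) ∈ L` and `η ∈ Δ̂`. -/
theorem existsUnique_pi
    (V : Type*) [AddCommGroup V] [Module ℝ V] [FiniteDimensional ℝ V]
    (L : Submodule ℝ (V × Module.Dual ℝ V)) (hL : IsLagrangian L) :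
    ∃! P : (Submodule.map (LinearMap.snd ℝ V (Module.Dual ℝ V)) L) →ₗ[ℝ]
             (Submodule.map (LinearMap.snd ℝ V (Module.Dual ℝ V)) L) →ₗ[ℝ] ℝ,
      (∀ x, P x x = 0) ∧
      ∀ (v : V) (ξ : Module.Dual ℝ V) (h : (v, ξ) ∈ L)
        (η : Submodule.map (LinearMap.snd ℝ V (Module.Dual ℝ V)) L),
        P ⟨ξ, Submodule.mem_map_of_mem h⟩ η = (η : Module.Dual ℝ V) v := by
  obtain ⟨-, hpair⟩ := hL
  set Δ := Submodule.map (LinearMap.snd ℝ V (Module.Dual ℝ V)) L with hΔ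
  -- key: if (v,0) ∈ L and η ∈ Δ then η v = 0
  have key : ∀ v : V, (v, (0 : Module.Dual ℝ V)) ∈ L →
      ∀ η : Δ, (η : Module.Dual ℝ V) v = 0 := by
    rintro v hv ⟨η, ⟨w, η'⟩, hw, rfl⟩
    have := hpair _ hv _ hw
    simp only [diracPairing] at this
    simp only [LinearMap.snd_apply]
    simp at this
    linarith
  -- consequence: two lifts give the same value
  have key2 : ∀ (v w : V) (ξ : Module.Dual ℝ V), (v, ξ) ∈ L → (w, ξ) ∈ L →
      ∀ η : Δ, (η : Module.Dual ℝ V) v = (η : Module.Dual ℝ V) w := by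
    intro v w ξ hv hw η
    have hvw : (v - w, (0 : Module.Dual ℝ V)) ∈ L := by
      have := L.sub_mem hv hw
      simpa using this
    have := key _ hvw η
    rw [map_sub] at this
    linarith
  -- the restricted projection L → Δ is surjective; choose a linear section
  let F : L →ₗ[ℝ] Δ :=
    LinearMap.codRestrict Δ ((LinearMap.snd ℝ V (Module.Dual ℝ V)).comp L.subtype)
      (fun x => Submodule.mem_map_of_mem x.2)
  have hFsurj : LinearMap.range F = ⊤ := by
    rw [LinearMap.range_eq_top]
    rintro ⟨η, x, hx, rfl⟩
    exact ⟨⟨x, hx⟩, rfl⟩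
  haveI : Module.Free ℝ Δ := Module.Free.of_divisionRing ℝ Δ
  obtain ⟨s, hs⟩ := F.exists_rightInverse_of_surjective hFsurj
  have hsval : ∀ ξ : Δ, ((s ξ : L) : V × Module.Dual ℝ V).2 = (ξ : Module.Dual ℝ V) := by
    intro ξ
    have := congrArg (fun f => ((f ξ : Δ) : Module.Dual ℝ V)) hs
    simpa [F, LinearMap.codRestrict] using this
  -- define P
  let g : Δ →ₗ[ℝ] V := ((LinearMap.fst ℝ V (Module.Dual ℝ V)).comp L.subtype).comp s
  let P : Δ →ₗ[ℝ] Δ →ₗ[ℝ] ℝ :=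
    LinearMap.mk₂ ℝ (fun ξ η => (η : Module.Dual ℝ V) (g ξ))
      (fun ξ ξ' η => by rw [map_add, map_add])
      (fun c ξ η => by rw [map_smul, map_smul])
      (fun ξ η η' => rfl)
      (fun c ξ η => rfl)
  have hPspec : ∀ (v : V) (ξ : Module.Dual ℝ V) (h : (v, ξ) ∈ L) (η : Δ),
      P ⟨ξ, Submodule.mem_map_of_mem h⟩ η = (η : Module.Dual ℝ V) v := by
    intro v ξ h η
    have hmem : ((s ⟨ξ, Submodule.mem_map_of_mem h⟩ : L) : V × Module.Dual ℝ V) ∈ L :=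
      (s ⟨ξ, Submodule.mem_map_of_mem h⟩ : L).2
    have h2 := hsval ⟨ξ, Submodule.mem_map_of_mem h⟩
    have hmem' : (g ⟨ξ, Submodule.mem_map_of_mem h⟩, ξ) ∈ L := by
      have : ((s ⟨ξ, Submodule.mem_map_of_mem h⟩ : L) : V × Module.Dual ℝ V)
          = (g ⟨ξ, Submodule.mem_map_of_mem h⟩, ξ) := by
        ext
        · rfl
        · exact congrFun (congrArg _ h2) _
      rwa [this] at hmem
    exact key2 _ _ ξ hmem' h η
  refine ⟨P, ⟨?_, hPspec⟩, ?_⟩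
  · -- alternating
    rintro ⟨ξ, x, hx, rfl⟩
    have hx' : (x.1, x.2) ∈ L := by simpa using hx
    simp only [LinearMap.snd_apply]
    rw [hPspec x.1 x.2 hx']
    have := hpair x hx x hx
    simp only [diracPairing] at this
    simp only [LinearMap.snd_apply]
    linarith
  · -- uniqueness
    rintro Q ⟨-, hQ⟩
    ext ⟨ξ, x, hx, rfl⟩ η
    have hx' : (x.1, x.2) ∈ L := by simpa using hx
    simp only [LinearMap.snd_apply]
    rw [hQ x.1 x.2 hx' η, hPspec x.1 x.2 hx' η]
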